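/- Let $P, Q \in \mathbb{C}^n$, and suppose $T(S_n\langle P\rangle) \subseteq T(S_n\langle Q\rangle)$ (which holds whenever the multiplicity partition $\lambda$ of the coordinates of $P$ is dominated by the multiplicity partition $\mu$ of the coordinates of $Q$) and that the coordinate sums $\Sigma(P) = \sum_i P_i$ and $\Sigma(Q) = \sum_i Q_i$ are distinct. Let $Y = S_n\langle P, Q\rangle$. Then $T(S_n\langle P\rangle) = T(Y) + (x_1 + \dots + x_n)$ as ideals of $\mathbb{C}[x_1,\dots,x_n]$. -/

import Mathlib

open MvPolynomial

noncomputable section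

/-- The top degree component of a polynomial. -/
def topComponent {n : ℕ} (f : MvPolynomial (Fin n) ℂ) : MvPolynomial (Fin n) ℂ :=
  homogeneousComponent f.totalDegree f

/-- The top degree (associated graded) ideal `T(Y)` of a set `Y ⊆ ℂⁿ`. -/
def topIdeal {n : ℕ} (Y : Set (Fin n → ℂ)) : Ideal (MvPolynomial (Fin n) ℂ) :=
  Ideal.span {g | ∃ f ∈ vanishingIdeal ℂ Y, f ≠ 0 ∧ topComponent f = g}

/-- The orbit of a point of `ℂⁿ` under the symmetric group permuting coordinates. -/
def permOrbit {n : ℕ} (P : Fin n → ℂ) : Set (Fin n → ℂ) :=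
  {R | ∃ σ : Equiv.Perm (Fin n), R = P ∘ σ}

namespace TopIdealAux

attribute [local instance] MvPolynomial.gradedAlgebra

variable {n : ℕ}

lemma decompose_apply (f : MvPolynomial (Fin n) ℂ) (i : ℕ) :
    (DirectSum.decompose (homogeneousSubmodule (Fin n) ℂ) f i : MvPolynomial (Fin n) ℂ)
      = homogeneousComponent i f :=
  MvPolynomial.decomposition.decompose'_apply f i

lemma hc_mul_left {p : MvPolynomial (Fin n) ℂ} {k : ℕ} (hp : p.IsHomogeneous k)
    (u : MvPolynomial (Fin n) ℂ) (e : ℕ) :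
    homogeneousComponent (k + e) (p * u) = p * homogeneousComponent e u := by
  have h := DirectSum.coe_decompose_mul_add_of_left_mem (homogeneousSubmodule (Fin n) ℂ)
    (i := k) (j := e) (b := u) ((mem_homogeneousSubmodule _ _).mpr hp)
  rwa [decompose_apply, decompose_apply] at h

lemma hc_mul_left_zero {p : MvPolynomial (Fin n) ℂ} {k : ℕ} (hp : p.IsHomogeneous k)
    (u : MvPolynomial (Fin n) ℂ) {e : ℕ} (he : ¬ k ≤ e) :
    homogeneousComponent e (p * u) = 0 := by
  have h := DirectSum.coe_decompose_mul_of_left_mem_of_not_le (homogeneousSubmodule (Fin n) ℂ)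
    (b := u) ((mem_homogeneousSubmodule _ _).mpr hp) he
  rwa [decompose_apply] at h

lemma hc_mul_right {p : MvPolynomial (Fin n) ℂ} {k : ℕ} (hp : p.IsHomogeneous k)
    (u : MvPolynomial (Fin n) ℂ) (e : ℕ) :
    homogeneousComponent (e + k) (u * p) = homogeneousComponent e u * p := by
  have h := DirectSum.coe_decompose_mul_add_of_right_mem (homogeneousSubmodule (Fin n) ℂ)
    (i := e) (j := k) (a := u) ((mem_homogeneousSubmodule _ _).mpr hp)
  rwa [decompose_apply, decompose_apply] at h

lemma hc_mul_right_zero {p : MvPolynomial (Fin n) ℂ} {k : ℕ} (hp : p.IsHomogeneous k)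
    (u : MvPolynomial (Fin n) ℂ) {e : ℕ} (he : ¬ k ≤ e) :
    homogeneousComponent e (u * p) = 0 := by
  have h := DirectSum.coe_decompose_mul_of_right_mem_of_not_le (homogeneousSubmodule (Fin n) ℂ)
    (a := u) ((mem_homogeneousSubmodule _ _).mpr hp) he
  rwa [decompose_apply] at h

lemma topComponent_ne_zero {f : MvPolynomial (Fin n) ℂ} (hf : f ≠ 0) : topComponent f ≠ 0 := by
  obtain ⟨m, hm, hdeg⟩ := Finset.exists_mem_eq_sup f.support
    (Finset.nonempty_iff_ne_empty.mpr (fun h => hf (support_eq_empty.mp h)))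
    (fun s => s.sum fun _ e => e)
  intro h0
  have : coeff m (topComponent f) = coeff m f := by
    rw [topComponent, coeff_homogeneousComponent, if_pos]
    exact hdeg.symm
  rw [h0, coeff_zero] at this
  exact mem_support_iff.mp hm this.symm

lemma exists_rep {Y : Set (Fin n → ℂ)} {t : MvPolynomial (Fin n) ℂ} {d : ℕ}
    (ht : t ∈ topIdeal Y) (htd : t.IsHomogeneous d) :
    ∃ h ∈ vanishingIdeal ℂ Y, h.totalDegree ≤ d ∧ homogeneousComponent d h = t := by
  obtain ⟨m, c, g, hsum⟩ := Submodule.mem_span_set'.mp ht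
  have hg : ∀ i, ∃ f ∈ vanishingIdeal ℂ Y, f ≠ 0 ∧
      topComponent f = (g i : MvPolynomial (Fin n) ℂ) := fun i => (g i).2
  choose w hwI hw0 hwt using hg
  set c' : Fin m → MvPolynomial (Fin n) ℂ := fun i =>
    if (w i).totalDegree ≤ d then homogeneousComponent (d - (w i).totalDegree) (c i) else 0
    with hc'
  refine ⟨∑ i, c' i * w i, Ideal.sum_mem _ fun i _ => Ideal.mul_mem_left _ _ (hwI i), ?_, ?_⟩
  · refine (totalDegree_finset_sum _ _).trans (Finset.sup_le fun i _ => ?_)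
    by_cases hle : (w i).totalDegree ≤ d
    · refine (totalDegree_mul _ _).trans ?_
      simp only [hc', if_pos hle]
      have := (homogeneousComponent_isHomogeneous (d - (w i).totalDegree)
        (c i)).totalDegree_le
      omega
    · simp [hc', if_neg hle]
  · have key : ∀ i, homogeneousComponent d (c' i * w i) = c' i * topComponent (w i) := by
      intro i
      by_cases hle : (w i).totalDegree ≤ d
      · have hhom : (c' i).IsHomogeneous (d - (w i).totalDegree) := by
          simp only [hc', if_pos hle]; exact homogeneousComponent_isHomogeneous _ _
        have h := hc_mul_left hhom (w i) (w i).totalDegree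
        rw [Nat.sub_add_cancel hle] at h
        exact h
      · simp [hc', if_neg hle]
    have key2 : ∀ i, c' i * topComponent (w i)
        = homogeneousComponent d (c i * (g i : MvPolynomial (Fin n) ℂ)) := by
      intro i
      rw [← hwt i]
      have htop : (topComponent (w i)).IsHomogeneous (w i).totalDegree :=
        homogeneousComponent_isHomogeneous _ _
      by_cases hle : (w i).totalDegree ≤ d
      · have h := hc_mul_right htop (c i) (d - (w i).totalDegree)
        rw [Nat.sub_add_cancel hle] at h
        rw [h]
        simp only [hc', if_pos hle]
      · rw [hc_mul_right_zero htop (c i) hle]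
        simp [hc', if_neg hle]
    have ht' : homogeneousComponent d t = t := by
      rw [homogeneousComponent_of_mem ((mem_homogeneousSubmodule _ _).mpr htd), if_pos rfl]
    calc homogeneousComponent d (∑ i, c' i * w i)
        = ∑ i, homogeneousComponent d (c' i * w i) := map_sum _ _ _
      _ = ∑ i, homogeneousComponent d (c i * (g i : MvPolynomial (Fin n) ℂ)) := by
          exact Finset.sum_congr rfl fun i _ => (key i).trans (key2 i)
      _ = homogeneousComponent d (∑ i, c i * (g i : MvPolynomial (Fin n) ℂ)) :=
          (map_sum _ _ _).symm
      _ = homogeneousComponent d t := by rw [show (∑ i, c i * (g i : MvPolynomial (Fin n) ℂ)) = t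
            from by simpa [smul_eq_mul] using hsum]
      _ = t := ht'

end TopIdealAux

open TopIdealAux

/-- Lemma 2.4: if `T(S_n⟨P⟩) ⊆ T(S_n⟨Q⟩)` and the coordinate sums of `P` and
`Q` differ, then `T(S_n⟨P⟩) = T(S_n⟨P,Q⟩) + (x₁+⋯+xₙ)`. -/
theorem top_ideal_equation {n : ℕ} (P Q : Fin n → ℂ)
    (hPQ : topIdeal (permOrbit P) ≤ topIdeal (permOrbit Q))
    (hsum : ∑ i, P i ≠ ∑ i, Q i) :
    topIdeal (permOrbit P) =
      topIdeal (permOrbit P ∪ permOrbit Q) ⊔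
        Ideal.span {∑ i : Fin n, (X i : MvPolynomial (Fin n) ℂ)} := by
  rcases Nat.eq_zero_or_pos n with rfl | hn
  · simp at hsum
  set s : MvPolynomial (Fin n) ℂ := ∑ i : Fin n, X i with hs
  have hs_eval : ∀ x : Fin n → ℂ, eval x s = ∑ i, x i := by
    intro x; rw [hs, map_sum]; simp
  have hs1 : s.IsHomogeneous 1 := by
    rw [hs]; exact IsHomogeneous.sum _ _ _ fun i _ => isHomogeneous_X _ _
  have hs0 : s ≠ 0 := by
    intro h
    have := hs_eval (fun _ => 1)
    rw [h] at this
    simp at this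
    exact (Nat.cast_ne_zero (R := ℂ)).mpr hn.ne' this.symm
  have hcomp1s : homogeneousComponent 1 s = s := by
    rw [homogeneousComponent_of_mem ((mem_homogeneousSubmodule _ _).mpr hs1), if_pos rfl]
  refine le_antisymm ?_ (sup_le ?_ ?_)
  · -- hard direction
    refine Ideal.span_le.mpr ?_
    rintro g ⟨f, hfI, hf0, rfl⟩
    set d := f.totalDegree with hd
    set t := topComponent f with htdef
    have htd : t.IsHomogeneous d := homogeneousComponent_isHomogeneous _ _
    have hft : homogeneousComponent d f = t := rfl
    have htQ : t ∈ topIdeal (permOrbit Q) := hPQ (Ideal.subset_span ⟨f, hfI, hf0, rfl⟩)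
    obtain ⟨h, hhI, hhdeg, hhd⟩ := exists_rep htQ htd
    set c : ℂ := (∑ i, P i) - (∑ i, Q i) with hc
    have hcne : c ≠ 0 := sub_ne_zero.mpr hsum
    set u : MvPolynomial (Fin n) ℂ := f - h with hu
    set g : MvPolynomial (Fin n) ℂ :=
      C c⁻¹ * ((s - C (∑ i, Q i)) * f - (s - C (∑ i, P i)) * h) with hg
    have hgA : g = C c⁻¹ * (s * u + C (∑ i, P i) * h - C (∑ i, Q i) * f) := by
      rw [hg, hu]; ring
    have hu_high : ∀ e, d ≤ e → homogeneousComponent e u = 0 := by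
      intro e he
      rw [hu, map_sub]
      rcases eq_or_lt_of_le he with rfl | hlt
      · rw [hhd, hft]
        exact sub_self t
      · rw [homogeneousComponent_eq_zero _ _ (hd ▸ hlt),
          homogeneousComponent_eq_zero _ _ (lt_of_le_of_lt hhdeg hlt), sub_zero]
    have hcomp : ∀ e, homogeneousComponent e g
        = C c⁻¹ * (homogeneousComponent e (s * u) + C (∑ i, P i) * homogeneousComponent e h
            - C (∑ i, Q i) * homogeneousComponent e f) := by
      intro e
      rw [hgA, homogeneousComponent_C_mul, map_sub, map_add, homogeneousComponent_C_mul,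
        homogeneousComponent_C_mul]
    have hg_high : ∀ e, d < e → homogeneousComponent e g = 0 := by
      intro e he
      obtain ⟨e', rfl⟩ : ∃ e', e = e' + 1 := ⟨e - 1, by omega⟩
      rw [hcomp]
      have h1 : homogeneousComponent (e' + 1) (s * u) = s * homogeneousComponent e' u := by
        have := hc_mul_left hs1 u e'
        rwa [add_comm] at this
      rw [h1, hu_high e' (by omega),
        homogeneousComponent_eq_zero _ h (by omega),
        homogeneousComponent_eq_zero _ f (by omega)]
      simp
    have hgd : ∃ w : MvPolynomial (Fin n) ℂ,
        homogeneousComponent d g = C c⁻¹ * (s * w) + t := by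
      have hCc : C c⁻¹ * C c = (1 : MvPolynomial (Fin n) ℂ) := by
        rw [← C_mul, inv_mul_cancel₀ hcne, C_1]
      rcases Nat.eq_zero_or_pos d with hd0 | hd1
      · refine ⟨0, ?_⟩
        rw [hcomp, hc_mul_left_zero hs1 u (by omega), hhd, hft]
        rw [show (0 : MvPolynomial (Fin n) ℂ) + C (∑ i : Fin n, P i) * t
            - C (∑ i : Fin n, Q i) * t = C c * t by rw [hc, C_sub]; ring]
        rw [← mul_assoc, hCc, one_mul, mul_zero, mul_zero, zero_add]
      · obtain ⟨d', hd'⟩ : ∃ d', d = d' + 1 := ⟨d - 1, by omega⟩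
        refine ⟨homogeneousComponent d' u, ?_⟩
        have h1 : homogeneousComponent d (s * u) = s * homogeneousComponent d' u := by
          have := hc_mul_left hs1 u d'
          rwa [add_comm, ← hd'] at this
        rw [hcomp, h1, hhd, hft]
        rw [show s * homogeneousComponent d' u + C (∑ i : Fin n, P i) * t
            - C (∑ i : Fin n, Q i) * t = s * homogeneousComponent d' u + C c * t by
          rw [hc, C_sub]; ring]
        rw [mul_add, ← mul_assoc (C c⁻¹) (C c) t, hCc, one_mul]
    obtain ⟨w, hgd⟩ := hgd
    have hgI : g ∈ vanishingIdeal ℂ (permOrbit P ∪ permOrbit Q) := by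
      rintro x (⟨σ, rfl⟩ | ⟨σ, rfl⟩) <;> change eval _ _ = 0
      · have h1 : eval (P ∘ ⇑σ) f = 0 := hfI _ ⟨σ, rfl⟩
        have h2 : ∑ i : Fin n, (P ∘ ⇑σ) i = ∑ i, P i := Equiv.sum_comp σ P
        rw [hg, eval_mul, eval_sub, eval_mul, eval_mul, eval_sub, eval_sub, eval_C, eval_C,
          eval_C, hs_eval, h1, h2]
        ring
      · have h1 : eval (Q ∘ ⇑σ) h = 0 := hhI _ ⟨σ, rfl⟩
        have h2 : ∑ i : Fin n, (Q ∘ ⇑σ) i = ∑ i, Q i := Equiv.sum_comp σ Q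
        rw [hg, eval_mul, eval_sub, eval_mul, eval_mul, eval_sub, eval_sub, eval_C, eval_C,
          eval_C, hs_eval, h1, h2]
        ring
    have hmem1 : homogeneousComponent d g ∈
        topIdeal (permOrbit P ∪ permOrbit Q) ⊔ Ideal.span {s} := by
      by_cases hg0 : g = 0
      · rw [hg0, map_zero]; exact zero_mem _
      · have hdegg : g.totalDegree ≤ d := by
          by_contra hlt
          exact topComponent_ne_zero hg0 (hg_high _ (lt_of_not_ge hlt))
        rcases lt_or_eq_of_le hdegg with hlt | heq
        · rw [homogeneousComponent_eq_zero _ _ hlt]; exact zero_mem _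
        · have htop : homogeneousComponent d g = topComponent g := by
            rw [topComponent, heq]
          rw [htop]
          exact Ideal.mem_sup_left (Ideal.subset_span ⟨g, hgI, hg0, rfl⟩)
    have hmem2 : C c⁻¹ * (s * w) ∈
        topIdeal (permOrbit P ∪ permOrbit Q) ⊔ Ideal.span {s} :=
      Ideal.mem_sup_right (Ideal.mem_span_singleton.mpr ⟨C c⁻¹ * w, by ring⟩)
    have hfin := Ideal.sub_mem _ hmem1 hmem2
    rw [hgd] at hfin
    simpa using hfin
  · -- topIdeal (P ∪ Q) ≤ topIdeal P
    refine Ideal.span_le.mpr ?_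
    rintro g ⟨f, hfI, hf0, rfl⟩
    exact Ideal.subset_span ⟨f, vanishingIdeal_anti_mono Set.subset_union_left hfI, hf0, rfl⟩
  · refine Ideal.span_le.mpr ?_
    rintro g rfl
    set a : ℂ := ∑ i, P i with ha
    have hfI : s - C a ∈ vanishingIdeal ℂ (permOrbit P) := by
      rintro x ⟨σ, rfl⟩
      change eval _ _ = 0
      rw [map_sub, eval_C, hs_eval,
        show ∑ i : Fin n, (P ∘ ⇑σ) i = ∑ i, P i from Equiv.sum_comp σ P]
      exact sub_self _
    have hcomp1 : homogeneousComponent 1 (s - C a) = s := by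
      rw [map_sub, hcomp1s,
        homogeneousComponent_eq_zero _ _ (by rw [totalDegree_C]; omega), sub_zero]
    have hne : s - C a ≠ 0 := by
      intro h0
      rw [h0, map_zero] at hcomp1
      exact hs0 hcomp1.symm
    have hdeg1 : (s - C a).totalDegree = 1 := by
      refine le_antisymm ?_ ?_
      · rw [sub_eq_add_neg, ← C_neg]
        refine (totalDegree_add _ _).trans ?_
        rw [totalDegree_C]
        exact max_le hs1.totalDegree_le (by omega)
      · by_contra hlt
        push_neg at hlt
        rw [homogeneousComponent_eq_zero _ _ (by omega)] at hcomp1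
        exact hs0 hcomp1.symm
    have htopc : topComponent (s - C a) = s := by
      rw [topComponent, hdeg1]; exact hcomp1
    exact Ideal.subset_span ⟨s - C a, hfI, hne, htopc⟩
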